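/- Let p be an odd prime, and write r = p^k r_1 with p not dividing r_1 and k \geq 1. Then \sum_{d | r_1} \mu(r_1/d) \left( \binom{3 p^k d - 1}{p^k d - 1} - \binom{3 p^{k-1} d - 1}{p^{k-1} d - 1} \right) is divisible by p^{3k}. -/

import Mathlib

open Finset

lemma aux1 (M : ℕ) (hM : 1 ≤ M) :
    Nat.choose (3*M-1) (M-1) * (M-1).factorial = ∏ j ∈ Ico 1 M, (2*M + j) := by
  have h2M : (2*M).factorial = ∏ j ∈ Ico 1 (2*M+1), j := by
    rw [Finset.prod_Ico_id_eq_factorial]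
  have h3M : (3*M-1).factorial = ∏ j ∈ Ico 1 (3*M), j := by
    have : 3*M = (3*M-1) + 1 := by omega
    rw [this, Finset.prod_Ico_id_eq_factorial]
    norm_num
  have hsplit : (∏ j ∈ Ico 1 (2*M+1), j) * ∏ j ∈ Ico (2*M+1) (3*M), j
      = ∏ j ∈ Ico 1 (3*M), j :=
    Finset.prod_Ico_consecutive _ (by omega) (by omega)
  have hshift : (∏ j ∈ Ico (2*M+1) (3*M), j) = ∏ j ∈ Ico 1 M, (2*M + j) := by
    rw [Finset.prod_Ico_eq_prod_range, Finset.prod_Ico_eq_prod_range]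
    apply Finset.prod_congr
    · congr 1; omega
    · intro i _; omega
  have hch : Nat.choose (3*M-1) (M-1) * (M-1).factorial * (2*M).factorial = (3*M-1).factorial := by
    have h := Nat.choose_mul_factorial_mul_factorial (n := 3*M-1) (k := M-1) (by omega)
    have : 3*M-1 - (M-1) = 2*M := by omega
    rwa [this] at h
  have key : (Nat.choose (3*M-1) (M-1) * (M-1).factorial) * (2*M).factorial
      = (∏ j ∈ Ico 1 M, (2*M + j)) * (2*M).factorial := by
    rw [hch, h3M, ← hsplit, ← h2M, hshift]; ring
  exact Nat.eq_of_mul_eq_mul_right (Nat.factorial_pos _) key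

lemma aux2 {M : Type*} [CommMonoid M] (p n : ℕ) (hp : 0 < p) (f : ℕ → M) :
    ∏ j ∈ Ico 1 (p*n), f j
      = (∏ i ∈ Ico 1 n, f (p*i)) * ∏ j ∈ (Ico 1 (p*n)).filter (fun j => ¬ p ∣ j), f j := by
  rw [← Finset.prod_filter_mul_prod_filter_not (Ico 1 (p*n)) (fun j => p ∣ j)]
  congr 1
  refine (Finset.prod_nbij' (fun i => p * i) (fun j => j / p) ?_ ?_ ?_ ?_ ?_).symm
  · intro i hi
    rw [mem_Ico] at hi
    rw [mem_filter, mem_Ico]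
    exact ⟨⟨by nlinarith [hi.1], by exact (Nat.mul_lt_mul_left hp).mpr hi.2⟩, ⟨i, rfl⟩⟩
  · intro j hj
    rw [mem_filter, mem_Ico] at hj
    obtain ⟨⟨h1, h2⟩, hd⟩ := hj
    obtain ⟨c, hc⟩ := hd
    beta_reduce
    rw [mem_Ico, hc, Nat.mul_div_cancel_left _ hp]
    have hc0 : c ≠ 0 := by rintro rfl; rw [mul_zero] at hc; omega
    rw [hc] at h2
    exact ⟨Nat.one_le_iff_ne_zero.mpr hc0, Nat.lt_of_mul_lt_mul_left h2⟩
  · intro i _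
    beta_reduce
    rw [Nat.mul_div_cancel_left _ hp]
  · intro j hj
    rw [mem_filter] at hj
    obtain ⟨c, hc⟩ := hj.2
    beta_reduce
    rw [hc, Nat.mul_div_cancel_left _ hp]
  · intro i _
    rfl

lemma aux2' {M : Type*} [AddCommMonoid M] (p n : ℕ) (hp : 0 < p) (f : ℕ → M) :
    ∑ j ∈ Ico 1 (p*n), f j
      = (∑ i ∈ Ico 1 n, f (p*i)) + ∑ j ∈ (Ico 1 (p*n)).filter (fun j => ¬ p ∣ j), f j := by
  rw [← Finset.sum_filter_add_sum_filter_not (Ico 1 (p*n)) (fun j => p ∣ j)]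
  congr 1
  refine (Finset.sum_nbij' (fun i => p * i) (fun j => j / p) ?_ ?_ ?_ ?_ ?_).symm
  · intro i hi
    rw [mem_Ico] at hi
    rw [mem_filter, mem_Ico]
    exact ⟨⟨by nlinarith [hi.1], by exact (Nat.mul_lt_mul_left hp).mpr hi.2⟩, ⟨i, rfl⟩⟩
  · intro j hj
    rw [mem_filter, mem_Ico] at hj
    obtain ⟨⟨h1, h2⟩, hd⟩ := hj
    obtain ⟨c, hc⟩ := hd
    beta_reduce
    rw [mem_Ico, hc, Nat.mul_div_cancel_left _ hp]
    have hc0 : c ≠ 0 := by rintro rfl; rw [mul_zero] at hc; omega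
    rw [hc] at h2
    exact ⟨Nat.one_le_iff_ne_zero.mpr hc0, Nat.lt_of_mul_lt_mul_left h2⟩
  · intro i _
    beta_reduce
    rw [Nat.mul_div_cancel_left _ hp]
  · intro j hj
    rw [mem_filter] at hj
    obtain ⟨c, hc⟩ := hj.2
    beta_reduce
    rw [hc, Nat.mul_div_cancel_left _ hp]
  · intro i _
    rfl

lemma sqsum (M : ℕ) : 6 * ∑ j ∈ range (M+1), j^2 = M*(M+1)*(2*M+1) := by
  induction M with
  | zero => simp
  | succ m ih =>
    rw [Finset.sum_range_succ, Nat.mul_add, ih]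
    ring

lemma aux3 (p n : ℕ) (hp : 0 < p) (hn : 1 ≤ n) :
    Nat.choose (3*(p*n)-1) (p*n-1)
        * ∏ j ∈ (Ico 1 (p*n)).filter (fun j => ¬ p ∣ j), j
      = Nat.choose (3*n-1) (n-1)
        * ∏ j ∈ (Ico 1 (p*n)).filter (fun j => ¬ p ∣ j), (2*(p*n) + j) := by
  have hN1 : 1 ≤ p * n := Nat.mul_pos hp hn
  set N := p * n with hN
  set J := (Ico 1 N).filter (fun j => ¬ p ∣ j) with hJ
  -- factorials split
  have hIcoN : (∏ j ∈ Ico 1 N, j) = (N-1).factorial := by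
    rw [show N = (N-1)+1 by omega, Finset.prod_Ico_id_eq_factorial]
    norm_num
  have hIcon : (∏ i ∈ Ico 1 n, i) = (n-1).factorial := by
    rw [show n = (n-1)+1 by omega, Finset.prod_Ico_id_eq_factorial]
    norm_num
  have split1 : (N-1).factorial = (p^(n-1) * (n-1).factorial) * ∏ j ∈ J, j := by
    rw [← hIcoN, hN, aux2 p n hp (fun j => j), ← hN, ← hJ]
    congr 1
    rw [Finset.prod_mul_distrib, Finset.prod_const, hIcon, Nat.card_Ico]
  have split2 : (∏ j ∈ Ico 1 N, (2*N + j))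
      = (p^(n-1) * ∏ i ∈ Ico 1 n, (2*n + i)) * ∏ j ∈ J, (2*N + j) := by
    rw [hN, aux2 p n hp (fun j => 2*(p*n) + j), ← hN, ← hJ]
    congr 1
    have : ∀ i, 2*N + p*i = p * (2*n + i) := by intro i; rw [hN]; ring
    rw [Finset.prod_congr rfl (fun i _ => this i), Finset.prod_mul_distrib,
      Finset.prod_const, Nat.card_Ico]
  have key : (p^(n-1) * (n-1).factorial) *
        (Nat.choose (3*N-1) (N-1) * ∏ j ∈ J, j)
      = (p^(n-1) * (n-1).factorial) *
        (Nat.choose (3*n-1) (n-1) * ∏ j ∈ J, (2*N + j)) := by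
    calc (p^(n-1) * (n-1).factorial) * (Nat.choose (3*N-1) (N-1) * ∏ j ∈ J, j)
        = Nat.choose (3*N-1) (N-1) * ((p^(n-1) * (n-1).factorial) * ∏ j ∈ J, j) := by ring
      _ = Nat.choose (3*N-1) (N-1) * (N-1).factorial := by rw [← split1]
      _ = ∏ j ∈ Ico 1 N, (2*N + j) := aux1 N hN1
      _ = (p^(n-1) * ∏ i ∈ Ico 1 n, (2*n + i)) * ∏ j ∈ J, (2*N + j) := split2
      _ = (p^(n-1) * (Nat.choose (3*n-1) (n-1) * (n-1).factorial)) * ∏ j ∈ J, (2*N + j) := by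
          rw [aux1 n hn]
      _ = (p^(n-1) * (n-1).factorial) * (Nat.choose (3*n-1) (n-1) * ∏ j ∈ J, (2*N + j)) := by
          ring
  exact Nat.eq_of_mul_eq_mul_left (by positivity) key

lemma newton2 {R : Type*} [CommRing R] (s : Finset ℕ) (f : ℕ → R) :
    (∑ j ∈ s, f j)^2
      = (∑ j ∈ s, (f j)^2) + 2 * ∑ t ∈ Finset.powersetCard 2 s, ∏ i ∈ t, f i := by
  classical
  induction s using Finset.induction_on with
  | empty =>
    have : Finset.powersetCard 2 (∅ : Finset ℕ) = ∅ := by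
      rw [Finset.powersetCard_eq_filter]
      rw [Finset.powerset_empty, Finset.filter_singleton]
      norm_num
    simp [this]
  | insert _ _ ha ih =>
    rename_i a s
    rw [Finset.sum_insert ha, Finset.sum_insert ha,
      Finset.powersetCard_succ_insert ha, Finset.sum_union]
    · have himg : ∑ t ∈ (Finset.powersetCard 1 s).image (insert a), ∏ i ∈ t, f i
          = f a * ∑ j ∈ s, f j := by
        rw [Finset.sum_image ?inj, Finset.powersetCard_one, Finset.sum_map, Finset.mul_sum]
        · apply Finset.sum_congr rfl
          intro x hx
          have hax : a ∉ ({x} : Finset ℕ) := by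
            simp only [Finset.mem_singleton]
            rintro rfl
            exact ha hx
          simp only [Function.Embedding.coeFn_mk, Finset.prod_insert hax,
            Finset.prod_singleton]
        case inj =>
          intro t ht u hu h
          rw [Finset.mem_coe, Finset.mem_powersetCard] at ht hu
          have hat : a ∉ t := fun hc => ha (ht.1 hc)
          have hau : a ∉ u := fun hc => ha (hu.1 hc)
          rw [← Finset.erase_insert hat, ← Finset.erase_insert hau, h]
      rw [himg]
      norm_num
      linear_combination ih
    · rw [Finset.disjoint_left]
      intro t ht htu
      rw [Finset.mem_powersetCard] at ht
      rw [Finset.mem_image] at htu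
      obtain ⟨u, hu, rfl⟩ := htu
      exact ha (ht.1 (Finset.mem_insert_self a u))

def Jset (p N : ℕ) : Finset ℕ := (Finset.Ico 1 N).filter (fun j => ¬ p ∣ j)

lemma mem_Jset {p N j : ℕ} : j ∈ Jset p N ↔ (1 ≤ j ∧ j < N) ∧ ¬ p ∣ j := by
  unfold Jset
  rw [Finset.mem_filter, Finset.mem_Ico]

lemma Jset_refl {p N j : ℕ} (hpN : p ∣ N) (hj : j ∈ Jset p N) : (N - j) ∈ Jset p N := by
  rw [mem_Jset] at hj ⊢
  obtain ⟨⟨h1, h2⟩, h3⟩ := hj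
  refine ⟨⟨by omega, by omega⟩, fun hc => h3 ?_⟩
  have : N - (N - j) = j := by omega
  exact this ▸ Nat.dvd_sub hpN hc

lemma Jset_ne {p N j : ℕ} (hp : p.Prime) (hodd : Odd p) (hpN : p ∣ N)
    (hj : j ∈ Jset p N) : N - j ≠ j := by
  rw [mem_Jset] at hj
  obtain ⟨⟨h1, h2⟩, h3⟩ := hj
  intro hc
  have hN2 : N = 2 * j := by omega
  have : p ∣ 2 * j := hN2 ▸ hpN
  rcases (Nat.Prime.dvd_mul hp).mp this with h | h
  · have hple : p ≤ 2 := Nat.le_of_dvd (by norm_num) h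
    have h2 := hp.two_le
    have hp2 : p = 2 := by omega
    rw [hp2] at hodd
    exact absurd hodd (by decide)
  · exact h3 h

lemma twoA1 {R : Type*} [CommRing R] (p N : ℕ) (hp : p.Prime) (hodd : Odd p)
    (hpN : p ∣ N) :
    (2:R) * (∑ j ∈ Jset p N, ∏ i ∈ (Jset p N).erase j, (i:R))
      = (N:R) * ∑ j ∈ Jset p N, ∏ i ∈ ((Jset p N).erase j).erase (N - j), (i:R) := by
  set J := Jset p N with hJdef
  have hinvol : ∀ j ∈ J, N - (N - j) = j := by
    intro j hj
    rw [mem_Jset] at hj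
    omega
  have hswap : (∑ j ∈ J, ∏ i ∈ J.erase j, (i:R))
      = ∑ j ∈ J, ∏ i ∈ J.erase (N - j), (i:R) := by
    refine Finset.sum_nbij' (fun j => N - j) (fun j => N - j)
      (fun a ha => Jset_refl hpN ha) (fun a ha => Jset_refl hpN ha)
      hinvol hinvol ?_
    intro a ha
    rw [hinvol a ha]
  have h2 : (2:R) * (∑ j ∈ J, ∏ i ∈ J.erase j, (i:R))
      = (∑ j ∈ J, ∏ i ∈ J.erase j, (i:R)) + ∑ j ∈ J, ∏ i ∈ J.erase (N - j), (i:R) := by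
    rw [← hswap]; ring
  rw [h2, ← Finset.sum_add_distrib, Finset.mul_sum]
  apply Finset.sum_congr rfl
  intro j hj
  have hjJ' : (N - j) ∈ J.erase j :=
    Finset.mem_erase.mpr ⟨Jset_ne hp hodd hpN hj, Jset_refl hpN hj⟩
  have hjJ'' : j ∈ J.erase (N - j) := by
    refine Finset.mem_erase.mpr ⟨?_, hj⟩
    intro hc
    exact (Jset_ne hp hodd hpN hj) hc.symm
  rw [← Finset.mul_prod_erase _ _ hjJ', ← Finset.mul_prod_erase _ _ hjJ'',
    Finset.erase_right_comm]
  have hjN : j ≤ N := by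
    have := (mem_Jset.mp hj).1.2; omega
  have hcast : ((N - j : ℕ) : R) = (N:R) - (j:R) := by
    push_cast [hjN]; ring
  rw [hcast]
  ring

lemma six_sq (m : ℕ) : 6 * ∑ j ∈ Ico 1 (m+1), j^2 = m*(m+1)*(2*m+1) := by
  have h0 : ∑ j ∈ Ico 1 (m+1), j^2 = ∑ j ∈ range (m+1), j^2 := by
    rw [range_eq_Ico, ← Finset.sum_Ico_consecutive _ (Nat.zero_le 1) (by omega)]
    simp
  rw [h0, sqsum]

lemma threeS (p k d : ℕ) (hp : p.Prime) (hodd : Odd p) (hk : 1 ≤ k) (hd : 1 ≤ d) :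
    (3 : ZMod (p^k)) * ∑ j ∈ Jset p (p^k*d), (((j : ZMod (p^k)))⁻¹)^2 = 0 := by
  obtain ⟨m, rfl⟩ : ∃ m, k = m + 1 := ⟨k - 1, by omega⟩
  set k := m + 1 with hkdef
  haveI : NeZero (p^k) := ⟨pow_ne_zero _ hp.pos.ne'⟩
  haveI : Fact (1 < p^k) := ⟨Nat.one_lt_pow (by omega) hp.one_lt⟩
  have hpkpos : 0 < p^k := pow_pos hp.pos k
  have hpdvd : p ∣ p^k := dvd_pow_self p (by omega)
  -- Step 1 : block reduction
  have hblock : ∑ j ∈ Jset p (p^k*d), (((j : ZMod (p^k)))⁻¹)^2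
      = ∑ x ∈ (range d) ×ˢ (Jset p (p^k)), (((x.2 : ZMod (p^k)))⁻¹)^2 := by
    refine Finset.sum_nbij' (fun j => (j / p^k, j % p^k)) (fun x => x.1 * p^k + x.2)
      ?_ ?_ ?_ ?_ ?_
    · intro j hj
      rw [mem_Jset] at hj
      obtain ⟨⟨h1, h2⟩, h3⟩ := hj
      rw [Finset.mem_product]
      dsimp only
      rw [Finset.mem_range, mem_Jset]
      refine ⟨?_, ⟨?_, Nat.mod_lt _ hpkpos⟩, ?_⟩
      · exact (Nat.div_lt_iff_lt_mul hpkpos).mpr (by rw [mul_comm d (p^k)]; exact h2)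
      · have hz : j % p^k ≠ 0 := by
          intro hz
          exact h3 (dvd_trans hpdvd (Nat.dvd_of_mod_eq_zero hz))
        exact Nat.pos_of_ne_zero hz
      · intro hc
        apply h3
        have := Nat.div_add_mod j (p^k)
        have hflr : p ∣ p^k * (j / p^k) := Dvd.dvd.mul_right hpdvd _
        calc p ∣ p^k * (j / p^k) + j % p^k := dvd_add hflr hc
          _ = j := this
    · intro x hx
      rw [Finset.mem_product, Finset.mem_range, mem_Jset] at hx
      obtain ⟨hb, ⟨h1, h2⟩, h3⟩ := hx
      rw [mem_Jset]
      refine ⟨⟨le_trans h1 (Nat.le_add_left _ _), ?_⟩, ?_⟩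
      · calc x.1 * p^k + x.2 < x.1 * p^k + p^k := by omega
          _ = (x.1 + 1) * p^k := by ring
          _ ≤ d * p^k := Nat.mul_le_mul_right _ (by omega)
          _ = p^k * d := by ring
      · intro hc
        apply h3
        have hflr : p ∣ x.1 * p^k := Dvd.dvd.mul_left hpdvd _
        exact (Nat.dvd_add_right hflr).mp hc
    · intro j _
      beta_reduce
      rw [mul_comm]
      exact Nat.div_add_mod j (p^k)
    · intro x hx
      rw [Finset.mem_product, mem_Jset] at hx
      obtain ⟨_, ⟨_, h2⟩, _⟩ := hx
      have hdiv : (x.1 * p^k + x.2) / p^k = x.1 := by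
        rw [mul_comm x.1 (p^k), Nat.mul_add_div hpkpos, Nat.div_eq_of_lt h2, add_zero]
      have hmod : (x.1 * p^k + x.2) % p^k = x.2 := by
        rw [mul_comm x.1 (p^k), Nat.mul_add_mod, Nat.mod_eq_of_lt h2]
      beta_reduce
      rw [hdiv, hmod]
    · intro j _
      have : ((j % p^k : ℕ) : ZMod (p^k)) = (j : ZMod (p^k)) := ZMod.natCast_mod j (p^k)
      beta_reduce
      rw [this]
  -- Step 2 : inversion permutation on Jset p (p^k)
  have hS0 : ∑ j ∈ Jset p (p^k), (((j : ZMod (p^k)))⁻¹)^2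
      = ∑ j ∈ Jset p (p^k), ((j : ZMod (p^k)))^2 := by
    have hcop : ∀ j ∈ Jset p (p^k), Nat.Coprime j (p^k) := by
      intro j hj
      rw [mem_Jset] at hj
      exact Nat.Coprime.pow_right _ ((hp.coprime_iff_not_dvd.mpr hj.2).symm)
    have hu : ∀ j ∈ Jset p (p^k), IsUnit ((j : ℕ) : ZMod (p^k)) := fun j hj =>
      (ZMod.isUnit_iff_coprime j (p^k)).mpr (hcop j hj)
    have hmul : ∀ j ∈ Jset p (p^k), ((j:ℕ) : ZMod (p^k)) * ((j:ℕ) : ZMod (p^k))⁻¹ = 1 :=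
      fun j hj => ZMod.mul_inv_of_unit _ (hu j hj)
    set φ : ℕ → ℕ := fun j => (((j : ℕ) : ZMod (p^k))⁻¹).val with hφ
    have hφcast : ∀ j : ℕ, ((φ j : ℕ) : ZMod (p^k)) = ((j:ℕ) : ZMod (p^k))⁻¹ :=
      fun j => ZMod.natCast_zmod_val _
    have hφmem : ∀ j ∈ Jset p (p^k), φ j ∈ Jset p (p^k) := by
      intro j hj
      have huinv : IsUnit (((j:ℕ) : ZMod (p^k))⁻¹) :=
        IsUnit.of_mul_eq_one _ (by rw [mul_comm]; exact hmul j hj)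
      rw [mem_Jset]
      refine ⟨⟨?_, ZMod.val_lt _⟩, ?_⟩
      · have hne0 : φ j ≠ 0 := by
          rw [hφ]
          beta_reduce
          rw [Ne, ZMod.val_eq_zero]
          exact huinv.ne_zero
        exact Nat.pos_of_ne_zero hne0
      · intro hc
        have hunit' : IsUnit ((φ j : ℕ) : ZMod (p^k)) := by rw [hφcast]; exact huinv
        have hcc := (ZMod.isUnit_iff_coprime (φ j) (p^k)).mp hunit'
        have hg : p ∣ Nat.gcd (φ j) (p^k) := Nat.dvd_gcd hc hpdvd
        rw [Nat.Coprime] at hcc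
        rw [hcc] at hg
        have := Nat.le_of_dvd one_pos hg
        have := hp.two_le
        omega
    have hφinv : ∀ j ∈ Jset p (p^k), φ (φ j) = j := by
      intro j hj
      have h1 : ((φ j : ℕ) : ZMod (p^k))⁻¹ = ((j:ℕ) : ZMod (p^k)) := by
        rw [hφcast]
        exact ZMod.inv_eq_of_mul_eq_one _ _ _
          (by rw [mul_comm]; exact hmul j hj)
      show (((φ j : ℕ) : ZMod (p^k))⁻¹).val = j
      rw [h1]
      exact ZMod.val_cast_of_lt (mem_Jset.mp hj).1.2
    refine Finset.sum_nbij' φ φ hφmem hφmem hφinv hφinv ?_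
    intro j hj
    rw [hφcast]
  -- Step 3 : 3 * T₀ = 0
  have hT0 : (3 : ZMod (p^k)) * ∑ j ∈ Jset p (p^k), ((j : ZMod (p^k)))^2 = 0 := by
    have hppow : p * p^m = p^k := by rw [← pow_succ']
    have hsplit := aux2' p (p^m) hp.pos (fun j => ((j:ℕ) : ZMod (p^k))^2)
    rw [hppow] at hsplit
    have hJeq : (Ico 1 (p^k)).filter (fun j => ¬ p ∣ j) = Jset p (p^k) := rfl
    rw [hJeq] at hsplit
    -- 6 * full sum = 0
    have hfull : (6 : ZMod (p^k)) * ∑ j ∈ Ico 1 (p^k), ((j:ℕ) : ZMod (p^k))^2 = 0 := by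
      have hcast : (6 : ZMod (p^k)) * ∑ j ∈ Ico 1 (p^k), ((j:ℕ) : ZMod (p^k))^2
          = ((6 * ∑ j ∈ Ico 1 (p^k), j^2 : ℕ) : ZMod (p^k)) := by
        push_cast
        ring
      rw [hcast, ZMod.natCast_eq_zero_iff]
      obtain ⟨l, hl⟩ : ∃ l, p^k = l + 1 := ⟨p^k - 1, by omega⟩
      rw [hl, six_sq]
      exact ⟨l*(2*l+1), by ring⟩
    -- 6 * p-part sum = 0
    have hppart : (6 : ZMod (p^k)) * ∑ i ∈ Ico 1 (p^m), (((p*i : ℕ)) : ZMod (p^k))^2 = 0 := by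
      have hcast : (6 : ZMod (p^k)) * ∑ i ∈ Ico 1 (p^m), (((p*i : ℕ)) : ZMod (p^k))^2
          = ((6 * ∑ i ∈ Ico 1 (p^m), (p*i)^2 : ℕ) : ZMod (p^k)) := by
        push_cast
        ring
      rw [hcast, ZMod.natCast_eq_zero_iff]
      have hfac : 6 * ∑ i ∈ Ico 1 (p^m), (p*i)^2 = p^2 * (6 * ∑ i ∈ Ico 1 (p^m), i^2) := by
        rw [Finset.mul_sum, Finset.mul_sum, Finset.mul_sum]
        rw [← Finset.sum_attach (Ico 1 (p^m)) (fun i => 6 * (p*i)^2)]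
        rw [← Finset.sum_attach (Ico 1 (p^m)) (fun i => p^2 * (6 * i^2))]
        apply Finset.sum_congr rfl
        intro i _
        ring
      rw [hfac]
      obtain ⟨l, hl⟩ : ∃ l, p^m = l + 1 := ⟨p^m - 1, by have := pow_pos hp.pos m; omega⟩
      rw [hl, six_sq, ← hl]
      refine ⟨p * (l*(2*l+1)), ?_⟩
      calc p^2 * (l * p^m * (2*l+1)) = p^(m+2) * (l*(2*l+1)) := by ring
        _ = p^k * (p * (l*(2*l+1))) := by rw [hkdef]; ring
    -- combine
    have h6T : (6 : ZMod (p^k)) * ∑ j ∈ Jset p (p^k), ((j : ZMod (p^k)))^2 = 0 := by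
      have : (6 : ZMod (p^k)) * ∑ j ∈ Jset p (p^k), ((j : ZMod (p^k)))^2
          = (6 : ZMod (p^k)) * ∑ j ∈ Ico 1 (p^k), ((j:ℕ) : ZMod (p^k))^2
            - (6 : ZMod (p^k)) * ∑ i ∈ Ico 1 (p^m), (((p*i : ℕ)) : ZMod (p^k))^2 := by
        rw [hsplit]
        push_cast
        ring
      rw [this, hfull, hppart, sub_zero]
    -- cancel the unit 2
    have hu2 : IsUnit (2 : ZMod (p^k)) := by
      have h := (ZMod.isUnit_iff_coprime 2 (p^k)).mpr (Nat.coprime_two_left.mpr (hodd.pow))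
      have h2 : ((2:ℕ) : ZMod (p^k)) = (2 : ZMod (p^k)) := by norm_cast
      rwa [h2] at h
    have hinv2 := ZMod.mul_inv_of_unit (2 : ZMod (p^k)) hu2
    have h23 : (2 : ZMod (p^k)) * ((3 : ZMod (p^k)) * ∑ j ∈ Jset p (p^k), ((j : ZMod (p^k)))^2) = 0 := by
      rw [show (2 : ZMod (p^k)) * ((3 : ZMod (p^k)) * ∑ j ∈ Jset p (p^k), ((j : ZMod (p^k)))^2)
        = (6 : ZMod (p^k)) * ∑ j ∈ Jset p (p^k), ((j : ZMod (p^k)))^2 by ring, h6T]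
    calc (3 : ZMod (p^k)) * ∑ j ∈ Jset p (p^k), ((j : ZMod (p^k)))^2
        = ((2 : ZMod (p^k))⁻¹ * 2) * ((3 : ZMod (p^k)) * ∑ j ∈ Jset p (p^k), ((j : ZMod (p^k)))^2) := by
          rw [mul_comm ((2 : ZMod (p^k))⁻¹) 2, hinv2, one_mul]
      _ = (2 : ZMod (p^k))⁻¹ * ((2 : ZMod (p^k)) * ((3 : ZMod (p^k)) * ∑ j ∈ Jset p (p^k), ((j : ZMod (p^k)))^2)) := by ring
      _ = 0 := by rw [h23, mul_zero]
  -- finish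
  rw [hblock, Finset.sum_product]
  dsimp only
  rw [Finset.sum_const, Finset.card_range, mul_smul_comm, hS0, hT0, smul_zero]

lemma crux_mod (p k d : ℕ) (hp : p.Prime) (hodd : Odd p) (hk : 1 ≤ k) (hd : 1 ≤ d) :
    ((p:ℤ))^k ∣
      (∑ j ∈ Jset p (p^k*d), ∏ i ∈ ((Jset p (p^k*d)).erase j).erase (p^k*d - j), (i:ℤ))
      + 4 * ∑ t ∈ Finset.powersetCard 2 (Jset p (p^k*d)), ∏ i ∈ (Jset p (p^k*d)) \ t, (i:ℤ) := by
  haveI : NeZero (p^k) := ⟨pow_ne_zero _ hp.pos.ne'⟩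
  set N := p^k*d with hNdef
  set J := Jset p N with hJdef
  -- reduce to ZMod (p^k)
  have hred : (((∑ j ∈ J, ∏ i ∈ (J.erase j).erase (N - j), (i:ℤ))
      + 4 * ∑ t ∈ Finset.powersetCard 2 J, ∏ i ∈ J \ t, (i:ℤ) : ℤ) : ZMod (p^k)) = 0 := by
    push_cast
    -- notation
    set R' := ZMod (p^k)
    have hpN : p ∣ N := Dvd.dvd.mul_right (dvd_pow_self p (by omega)) d
    have hNzero : ((N : ℕ) : R') = 0 := by
      rw [hNdef, Nat.cast_mul, ZMod.natCast_self, zero_mul]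
    have hcop : ∀ j ∈ J, Nat.Coprime j (p^k) := by
      intro j hj
      rw [hJdef, mem_Jset] at hj
      exact Nat.Coprime.pow_right _ ((hp.coprime_iff_not_dvd.mpr hj.2).symm)
    have hu : ∀ j ∈ J, IsUnit ((j:ℕ) : R') := fun j hj =>
      (ZMod.isUnit_iff_coprime j (p^k)).mpr (hcop j hj)
    set w : ℕ → R' := fun j => ((j:ℕ) : R')⁻¹ with hw
    have hmul : ∀ j ∈ J, ((j:ℕ) : R') * w j = 1 :=
      fun j hj => ZMod.mul_inv_of_unit _ (hu j hj)
    set Q' : R' := ∏ i ∈ J, (i : R') with hQ'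
    -- L0
    have L0 : ∀ t : Finset ℕ, t ⊆ J → (∏ i ∈ J \ t, (i:R')) = Q' * ∏ i ∈ t, w i := by
      intro t ht
      have h1 : (∏ i ∈ t, (i:R')) * ∏ i ∈ t, w i = 1 := by
        rw [← Finset.prod_mul_distrib]
        exact Finset.prod_eq_one (fun i hi => hmul i (ht hi))
      calc (∏ i ∈ J \ t, (i:R'))
          = (∏ i ∈ J \ t, (i:R')) * ((∏ i ∈ t, (i:R')) * ∏ i ∈ t, w i) := by
            rw [h1, mul_one]
        _ = ((∏ i ∈ J \ t, (i:R')) * ∏ i ∈ t, (i:R')) * ∏ i ∈ t, w i := by ring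
        _ = Q' * ∏ i ∈ t, w i := by rw [Finset.prod_sdiff ht]
    have hQW : Q' * (∏ i ∈ J, w i) = 1 := by
      have := L0 J (subset_refl J)
      rw [Finset.sdiff_self, Finset.prod_empty] at this
      exact this.symm
    -- cast facts
    have hjle : ∀ j ∈ J, j < N := fun j hj => (mem_Jset.mp (hJdef ▸ hj)).1.2
    have hneg : ∀ j ∈ J, ((N - j : ℕ) : R') = -((j:ℕ) : R') := by
      intro j hj
      have h := hjle j hj
      push_cast [Nat.cast_sub (le_of_lt h)]
      rw [hNzero]
      ring
    have hwneg : ∀ j ∈ J, w (N - j) = - w j := by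
      intro j hj
      have e1 : ((j:ℕ) : R') * w j = 1 := hmul j hj
      have e2' : ((N - j : ℕ) : R') * w (N - j) = 1 := hmul _ (Jset_refl hpN (hJdef ▸ hj))
      rw [hneg j hj] at e2'
      calc w (N - j) = (((j:ℕ) : R') * w j) * w (N - j) := by rw [e1, one_mul]
        _ = (- w j) * ((-((j:ℕ) : R')) * w (N - j)) := by ring
        _ = - w j := by rw [e2', mul_one]
    -- H, S, E₂
    set H : R' := ∑ j ∈ J, w j with hH
    set S : R' := ∑ j ∈ J, (w j)^2 with hS
    set E₂ : R' := ∑ t ∈ Finset.powersetCard 2 J, ∏ i ∈ t, w i with hE₂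
    -- CR
    have hCR : (∑ j ∈ J, ∏ i ∈ (J.erase j).erase (N - j), (i:R')) = -(Q' * S) := by
      have hterm : ∀ j ∈ J, (∏ i ∈ (J.erase j).erase (N - j), (i:R'))
          = -(Q' * (w j)^2) := by
        intro j hj
        have hne := Jset_ne hp hodd hpN (hJdef ▸ hj)
        have hsub : ({j, N - j} : Finset ℕ) ⊆ J := by
          intro x hx
          rw [Finset.mem_insert, Finset.mem_singleton] at hx
          rcases hx with rfl | rfl
          · exact hj
          · exact hJdef ▸ Jset_refl hpN (hJdef ▸ hj)
        have hset : (J.erase j).erase (N - j) = J \ {j, N - j} := by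
          rw [Finset.sdiff_insert, Finset.sdiff_singleton_eq_erase, Finset.erase_right_comm]
        rw [hset, L0 _ hsub]
        rw [Finset.prod_insert (by
          intro hmem
          exact hne (Finset.mem_singleton.mp hmem).symm), Finset.prod_singleton]
        rw [hwneg j hj]
        ring
      rw [Finset.sum_congr rfl hterm]
      rw [Finset.sum_neg_distrib, ← Finset.mul_sum, hS]
    -- A₂ in R'
    have hA2R : (∑ t ∈ Finset.powersetCard 2 J, ∏ i ∈ J \ t, (i:R')) = Q' * E₂ := by
      rw [hE₂, Finset.mul_sum]
      apply Finset.sum_congr rfl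
      intro t ht
      exact L0 t (Finset.mem_powersetCard.mp ht).1
    -- A₁ in R'
    have hA1R : (∑ j ∈ J, ∏ i ∈ J.erase j, (i:R')) = Q' * H := by
      rw [hH, Finset.mul_sum]
      apply Finset.sum_congr rfl
      intro j hj
      rw [← Finset.sdiff_singleton_eq_erase, L0 {j} (by simpa using hj), Finset.prod_singleton]
    -- unit 2 cancellation
    have hcancel2 : ∀ x : R', (2:R') * x = 0 → x = 0 := by
      have hu2 : IsUnit (2 : ZMod (p^k)) := by
        have h := (ZMod.isUnit_iff_coprime 2 (p^k)).mpr (Nat.coprime_two_left.mpr (hodd.pow))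
        have h2 : ((2:ℕ) : ZMod (p^k)) = (2 : ZMod (p^k)) := by norm_cast
        rwa [h2] at h
      have hinv2 := ZMod.mul_inv_of_unit (2 : ZMod (p^k)) hu2
      intro x hx
      calc x = ((2 : ZMod (p^k))⁻¹ * 2) * x := by
            rw [mul_comm ((2 : ZMod (p^k))⁻¹) 2, hinv2, one_mul]
        _ = (2 : ZMod (p^k))⁻¹ * ((2 : ZMod (p^k)) * x) := by ring
        _ = 0 := by rw [hx, mul_zero]
    -- 2 * A₁R = 0 hence H = 0
    have h2A1 := twoA1 (R := R') p N hp hodd hpN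
    rw [hNzero, zero_mul, ← hJdef] at h2A1
    have hA1z : (∑ j ∈ J, ∏ i ∈ J.erase j, (i:R')) = 0 := hcancel2 _ h2A1
    have hHz : H = 0 := by
      have hQH : Q' * H = 0 := by rw [← hA1R]; exact hA1z
      calc H = ((∏ i ∈ J, w i) * Q') * H := by rw [mul_comm _ Q', hQW, one_mul]
        _ = (∏ i ∈ J, w i) * (Q' * H) := by ring
        _ = 0 := by rw [hQH, mul_zero]
    -- Newton
    have hN2 := newton2 J w
    rw [← hH, ← hS, ← hE₂, hHz] at hN2
    have h2E : (2:R') * E₂ = -S := by linear_combination -hN2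
    -- 3S = 0
    have h3S : (3:R') * S = 0 := by
      rw [hS, hw]
      beta_reduce
      rw [hJdef, hNdef]
      exact threeS p k d hp hodd hk hd
    rw [hCR, hA2R]
    linear_combination 2 * Q' * h2E - Q' * h3S
  rw [ZMod.intCast_zmod_eq_zero_iff_dvd] at hred
  push_cast at hred
  exact hred

lemma crux (p k d : ℕ) (hp : p.Prime) (hodd : Odd p) (hk : 1 ≤ k) (hd : 1 ≤ d) :
    ((p:ℤ))^(3*k) ∣
      (∏ j ∈ Jset p (p^k*d), ((2*(p^k*d) + j : ℕ) : ℤ))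
        - ∏ j ∈ Jset p (p^k*d), ((j:ℕ) : ℤ) := by
  set N := p^k*d with hNdef
  set J := Jset p N with hJdef
  have hpN : p ∣ N := Dvd.dvd.mul_right (dvd_pow_self p (by omega)) d
  set A₁ : ℤ := ∑ j ∈ J, ∏ i ∈ J.erase j, (i:ℤ) with hA₁
  set A₂ : ℤ := ∑ t ∈ Finset.powersetCard 2 J, ∏ i ∈ J \ t, (i:ℤ) with hA₂
  set C : ℤ := ∑ j ∈ J, ∏ i ∈ (J.erase j).erase (N - j), (i:ℤ) with hC
  set Q : ℤ := ∏ j ∈ J, (j:ℤ) with hQz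
  set G : Finset ℕ → ℤ := fun t => (2*(N:ℤ))^t.card * ∏ i ∈ J \ t, (i:ℤ) with hG
  have hPcast : (∏ j ∈ J, ((2*N + j : ℕ) : ℤ)) = ∏ j ∈ J, ((2*(N:ℤ)) + (j:ℤ)) := by
    apply Finset.prod_congr rfl
    intro j _
    push_cast
    ring
  have hexp2 : (∏ j ∈ J, ((2*(N:ℤ)) + (j:ℤ))) = ∑ t ∈ J.powerset, G t := by
    rw [Finset.prod_add]
    apply Finset.sum_congr rfl
    intro t _
    rw [hG]
    beta_reduce
    rw [Finset.prod_const]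
  -- decompose into card ≤ 2 and the rest
  have hsplit : ∑ t ∈ J.powerset, G t
      = ((∑ t ∈ J.powerset.filter (fun t => t.card ≤ 2), G t)
        + ∑ t ∈ J.powerset.filter (fun t => ¬ t.card ≤ 2), G t) :=
    (Finset.sum_filter_add_sum_filter_not _ _ _).symm
  have hle2 : J.powerset.filter (fun t => t.card ≤ 2)
      = (Finset.powersetCard 0 J ∪ Finset.powersetCard 1 J) ∪ Finset.powersetCard 2 J := by
    ext t
    simp only [Finset.mem_filter, Finset.mem_powerset, Finset.mem_union,
      Finset.mem_powersetCard]
    constructor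
    · rintro ⟨h1, h2⟩
      have : t.card = 0 ∨ t.card = 1 ∨ t.card = 2 := by omega
      tauto
    · rintro ((⟨h1, h2⟩ | ⟨h1, h2⟩) | ⟨h1, h2⟩) <;> exact ⟨h1, by omega⟩
  have hdisj1 : Disjoint (Finset.powersetCard 0 J) (Finset.powersetCard 1 J) := by
    rw [Finset.disjoint_left]
    intro t ht1 ht2
    rw [Finset.mem_powersetCard] at ht1 ht2
    omega
  have hdisj2 : Disjoint (Finset.powersetCard 0 J ∪ Finset.powersetCard 1 J)
      (Finset.powersetCard 2 J) := by
    rw [Finset.disjoint_left]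
    intro t ht1 ht2
    rw [Finset.mem_union, Finset.mem_powersetCard, Finset.mem_powersetCard] at ht1
    rw [Finset.mem_powersetCard] at ht2
    omega
  have hsum0 : ∑ t ∈ Finset.powersetCard 0 J, G t = Q := by
    rw [Finset.powersetCard_zero, Finset.sum_singleton, hG]
    beta_reduce
    rw [Finset.card_empty, pow_zero, one_mul, Finset.sdiff_empty, hQz]
  have hsum1 : ∑ t ∈ Finset.powersetCard 1 J, G t = (2*(N:ℤ)) * A₁ := by
    rw [Finset.powersetCard_one, Finset.sum_map, hA₁, Finset.mul_sum]
    apply Finset.sum_congr rfl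
    intro j hj
    rw [hG]
    beta_reduce
    simp only [Function.Embedding.coeFn_mk]
    rw [Finset.card_singleton, pow_one, Finset.sdiff_singleton_eq_erase]
  have hsum2 : ∑ t ∈ Finset.powersetCard 2 J, G t = (2*(N:ℤ))^2 * A₂ := by
    rw [hA₂, Finset.mul_sum]
    apply Finset.sum_congr rfl
    intro t ht
    rw [hG]
    beta_reduce
    rw [(Finset.mem_powersetCard.mp ht).2]
  have hbig : ((p:ℤ))^(3*k) ∣ ∑ t ∈ J.powerset.filter (fun t => ¬ t.card ≤ 2), G t := by
    apply Finset.dvd_sum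
    intro t ht
    rw [Finset.mem_filter] at ht
    have hc3 : 3 ≤ t.card := by omega
    have hpow : (2*(N:ℤ))^t.card = (2*(N:ℤ))^3 * (2*(N:ℤ))^(t.card - 3) := by
      rw [← pow_add]
      congr 1
      omega
    have hdvd3 : ((p:ℤ))^(3*k) ∣ (2*(N:ℤ))^3 := by
      refine ⟨8*(d:ℤ)^3, ?_⟩
      rw [hNdef]
      push_cast
      ring
    rw [hG]
    beta_reduce
    rw [hpow]
    exact ((hdvd3.mul_right _).mul_right _)
  -- the low-order part
  have h2A1 := twoA1 (R := ℤ) p N hp hodd hpN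
  rw [← hJdef, ← hA₁, ← hC] at h2A1
  have hmod := crux_mod p k d hp hodd hk hd
  rw [← hNdef, ← hJdef, ← hC, ← hA₂] at hmod
  obtain ⟨v, hv⟩ := hmod
  have hX2 : ((p:ℤ))^(3*k) ∣ 2 * ((2*(N:ℤ))*A₁ + (2*(N:ℤ))^2*A₂) := by
    refine ⟨2*(d:ℤ)^2*v, ?_⟩
    have hNcast : (N:ℤ) = (p:ℤ)^k * (d:ℤ) := by rw [hNdef]; push_cast; ring
    rw [hNcast] at h2A1 ⊢
    linear_combination (2*(p:ℤ)^k*(d:ℤ)) * h2A1 + 2*((p:ℤ)^k*(d:ℤ))^2 * hv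
  have hcop2 : IsCoprime ((p:ℤ)^(3*k)) 2 := by
    have h1 : Nat.Coprime (p^(3*k)) 2 := Nat.coprime_two_right.mpr (hodd.pow)
    have h2 := Nat.isCoprime_iff_coprime.mpr h1
    push_cast at h2
    exact h2
  have hX : ((p:ℤ))^(3*k) ∣ ((2*(N:ℤ))*A₁ + (2*(N:ℤ))^2*A₂) := by
    exact hcop2.dvd_of_dvd_mul_left hX2
  have hPQ : (∏ j ∈ J, ((2*N + j : ℕ) : ℤ)) - Q
      = ((2*(N:ℤ))*A₁ + (2*(N:ℤ))^2*A₂)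
        + ∑ t ∈ J.powerset.filter (fun t => ¬ t.card ≤ 2), G t := by
    rw [hPcast, hexp2, hsplit, hle2, Finset.sum_union hdisj2, Finset.sum_union hdisj1,
      hsum0, hsum1, hsum2]
    ring
  rw [hPQ]
  exact dvd_add hX hbig

lemma perterm (p k d : ℕ) (hp : p.Prime) (hodd : Odd p) (hk : 1 ≤ k) (hd : 1 ≤ d) :
    ((p:ℤ))^(3*k) ∣ (Nat.choose (3*(p^k*d)-1) (p^k*d-1) : ℤ)
      - (Nat.choose (3*(p^(k-1)*d)-1) (p^(k-1)*d-1) : ℤ) := by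
  set n := p^(k-1)*d with hn
  have hpn : p * n = p^k * d := by
    rw [hn, ← mul_assoc, ← pow_succ']
    congr 2
    omega
  have hn1 : 1 ≤ n := Nat.mul_pos (pow_pos hp.pos _) hd
  have h3 := aux3 p n hp.pos hn1
  have hJ : (Ico 1 (p*n)).filter (fun j => ¬ p ∣ j) = Jset p (p*n) := rfl
  rw [hJ] at h3
  have h3z : (Nat.choose (3*(p*n)-1) (p*n-1) : ℤ) * ∏ j ∈ Jset p (p*n), (j:ℤ)
      = (Nat.choose (3*n-1) (n-1) : ℤ) * ∏ j ∈ Jset p (p*n), ((2*(p*n)+j : ℕ) : ℤ) := by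
    have hz := congrArg (Nat.cast : ℕ → ℤ) h3
    rw [Nat.cast_mul, Nat.cast_mul, Nat.cast_prod, Nat.cast_prod] at hz
    exact hz
  rw [hpn] at h3z
  have hcx := crux p k d hp hodd hk hd
  have hQcop : IsCoprime ((p:ℤ)^(3*k)) (∏ j ∈ Jset p (p^k*d), (j:ℤ)) := by
    apply IsCoprime.pow_left
    apply IsCoprime.prod_right
    intro j hj
    have hnd : ¬ p ∣ j := (mem_Jset.mp hj).2
    have hc : Nat.Coprime p j := hp.coprime_iff_not_dvd.mpr hnd
    exact_mod_cast Nat.isCoprime_iff_coprime.mpr hc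
  have hdvd : ((p:ℤ))^(3*k) ∣
      ((Nat.choose (3*(p^k*d)-1) (p^k*d-1) : ℤ) - (Nat.choose (3*n-1) (n-1) : ℤ))
        * ∏ j ∈ Jset p (p^k*d), (j:ℤ) := by
    have heq : ((Nat.choose (3*(p^k*d)-1) (p^k*d-1) : ℤ) - (Nat.choose (3*n-1) (n-1) : ℤ))
          * ∏ j ∈ Jset p (p^k*d), (j:ℤ)
        = (Nat.choose (3*n-1) (n-1) : ℤ)
          * ((∏ j ∈ Jset p (p^k*d), ((2*(p^k*d)+j : ℕ) : ℤ))
            - ∏ j ∈ Jset p (p^k*d), (j:ℤ)) := by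
      linear_combination h3z
    rw [heq]
    exact hcx.mul_left _
  exact hQcop.dvd_of_dvd_mul_right hdvd

open ArithmeticFunction in
theorem stmt_3 (p k r₁ : ℕ) (hp : p.Prime) (hpodd : Odd p) (hk : 1 ≤ k)
    (hr₁ : 0 < r₁) (hnd : ¬ p ∣ r₁) :
    ((p : ℤ))^(3*k) ∣ ∑ d ∈ r₁.divisors, moebius (r₁ / d) *
      ((Nat.choose (3*p^k*d - 1) (p^k*d - 1) : ℤ) -
       (Nat.choose (3*p^(k-1)*d - 1) (p^(k-1)*d - 1) : ℤ)) := by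
  apply Finset.dvd_sum
  intro d hd
  have hd1 : 1 ≤ d := Nat.pos_of_mem_divisors hd
  have hterm := perterm p k d hp hpodd hk hd1
  rw [mul_assoc 3 (p^k) d, mul_assoc 3 (p^(k-1)) d] at *
  exact hterm.mul_left _
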